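/- Let p = (e₀,e₁) ∈ W with X_Q(ξ,η) = (η, −‖η‖²ξ), and let π denote orthogonal projection ℝ^{2n+2} → T_pW. Then for j ≥ 2: π(D_{U_j} X_Q) = −V_j and π(D_{V_j} X_Q) = U_j, where D denotes the directional derivative in ℝ^{2n+2} of the extension X_Q(ξ,η)=(η,−‖η‖²ξ), computed along curves in W through p; and for j = 1: π(D_{U_1} X_Q) = −V₁ and π(D_{V_1} X_Q) = (3/2)U₁. -/

import Mathlib

noncomputable section
open scoped RealInnerProductSpace

/-- `ℝ^{n+1}` as a Euclidean space. -/
abbrev EV (n : ℕ) := EuclideanSpace ℝ (Fin (n + 1))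

/-- standard basis vector `eᵢ`. -/
def ev (n : ℕ) (i : Fin (n + 1)) : EV n := EuclideanSpace.single i 1

/-- Tangent space of `W = {‖ξ‖=1, ⟨ξ,η⟩=0}` at `p = (e₀,e₁)`. -/
def TpW (n : ℕ) : Set (EV n × EV n) := {w | w.1 0 = 0 ∧ w.2 0 + w.1 1 = 0}

/-- The Euclidean inner product on `ℝ^{2n+2}`. -/
def pairInner {n : ℕ} (v w : EV n × EV n) : ℝ := ⟪v.1, w.1⟫ + ⟪v.2, w.2⟫

/-- Euclidean directional derivative at `p = (e₀,e₁)` of the extension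
`X_Q(ξ,η) = (η, −‖η‖²ξ)` in the direction `w`:
`D_w X_Q = (w_η, −2⟨e₁,w_η⟩ e₀ − w_ξ)`. -/
def DX (n : ℕ) (w : EV n × EV n) : EV n × EV n :=
  (w.2, -((2 * w.2 1) • ev n 0) - w.1)

lemma pairInner_sub_left' {n : ℕ} (a b c : EV n × EV n) :
    pairInner (a - b) c = pairInner a c - pairInner b c := by
  simp [pairInner, inner_sub_left]; ring

lemma pairInner_self_eq_zero' {n : ℕ} (d : EV n × EV n) (h : pairInner d d = 0) : d = 0 := by
  have h1 : (0:ℝ) ≤ ⟪d.1, d.1⟫ := real_inner_self_nonneg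
  have h2 : (0:ℝ) ≤ ⟪d.2, d.2⟫ := real_inner_self_nonneg
  have e1 : ⟪d.1, d.1⟫ = 0 := by unfold pairInner at h; linarith
  have e2 : ⟪d.2, d.2⟫ = 0 := by unfold pairInner at h; linarith
  have hd1 : d.1 = 0 := by
    rwa [real_inner_self_eq_norm_sq, pow_eq_zero_iff, norm_eq_zero] at e1; norm_num
  have hd2 : d.2 = 0 := by
    rwa [real_inner_self_eq_norm_sq, pow_eq_zero_iff, norm_eq_zero] at e2; norm_num
  exact Prod.ext hd1 hd2

lemma TpW_sub' {n : ℕ} {a b : EV n × EV n} (ha : a ∈ TpW n) (hb : b ∈ TpW n) :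
    a - b ∈ TpW n := by
  obtain ⟨h1, h2⟩ := ha; obtain ⟨h3, h4⟩ := hb
  constructor <;> simp_all <;> linarith

lemma proj_key {n : ℕ} (pr : (EV n × EV n) →ₗ[ℝ] EV n × EV n)
    (hmem : ∀ v, pr v ∈ TpW n)
    (horth : ∀ v, ∀ w ∈ TpW n, pairInner (v - pr v) w = 0)
    (v t : EV n × EV n) (ht : t ∈ TpW n)
    (hv : ∀ w ∈ TpW n, pairInner (v - t) w = 0) : pr v = t := by
  set d := pr v - t with hd
  have hdW : d ∈ TpW n := TpW_sub' (hmem v) ht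
  have hz : pairInner d d = 0 := by
    have h : pairInner (v - t) d - pairInner (v - pr v) d = pairInner d d := by
      rw [← pairInner_sub_left']
      congr 1
      rw [hd]; abel
    rw [← h, hv d hdW, horth v d hdW, sub_zero]
  have h0 := pairInner_self_eq_zero' d hz
  rw [hd, sub_eq_zero] at h0
  exact h0

/-- with `pr` the orthogonal projection onto `T_pW` at `p = (e₀,e₁)`,
one has `pr(D_{U₁}X_Q) = −V₁`, `pr(D_{V₁}X_Q) = (3/2)U₁`, and for `j ≥ 2`:
`pr(D_{Uⱼ}X_Q) = −Vⱼ`, `pr(D_{Vⱼ}X_Q) = Uⱼ`. -/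
theorem stmt9 (n : ℕ) (hn : 1 ≤ n)
    (pr : (EV n × EV n) →ₗ[ℝ] EV n × EV n)
    (hmem : ∀ v, pr v ∈ TpW n)
    (horth : ∀ v, ∀ w ∈ TpW n, pairInner (v - pr v) w = 0) :
    -- U₁ = (e₁, −e₀), V₁ = (0, e₁)
    pr (DX n (ev n 1, -(ev n 0))) = ((0 : EV n), -(ev n 1)) ∧
    pr (DX n ((0 : EV n), ev n 1)) = ((3 / 2 : ℝ) • ((ev n 1, -(ev n 0)) : EV n × EV n)) ∧
    (∀ k : Fin n, (k : ℕ) ≠ 0 →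
      -- Uⱼ = (eⱼ, 0), Vⱼ = (0, eⱼ) with j = k+1 ≥ 2
      pr (DX n (ev n k.succ, (0 : EV n))) = ((0 : EV n), -(ev n k.succ)) ∧
      pr (DX n ((0 : EV n), ev n k.succ)) = ((ev n k.succ, (0 : EV n)) : EV n × EV n)) := by
  have hval1 : ((1 : Fin (n+1)) : ℕ) = 1 := by
    rw [Fin.val_one']; exact Nat.mod_eq_of_lt (by omega)
  have h01 : (0 : Fin (n+1)) ≠ 1 := by
    intro h; have := congrArg Fin.val h; rw [hval1] at this; simp at this
  refine ⟨?_, ?_, ?_⟩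
  · -- U₁ case
    have hU1 : DX n (ev n 1, -(ev n 0)) = (-(ev n 0), -(ev n 1)) := by
      simp [DX, ev, EuclideanSpace.single_apply, h01]
    rw [hU1]
    apply proj_key pr hmem horth
    · exact ⟨rfl, by simp [ev, EuclideanSpace.single_apply, h01]⟩
    · rintro w ⟨h1, h2⟩
      simp [pairInner, Prod.sub_def, inner_sub_left, inner_neg_left, ev,
        EuclideanSpace.inner_single_left, h1]
  · -- V₁ case
    have hV1 : DX n ((0:EV n), ev n 1) = (ev n 1, (-2:ℝ) • ev n 0) := by
      simp only [DX, ev, EuclideanSpace.single_apply, if_pos rfl]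
      norm_num
    rw [hV1]
    apply proj_key pr hmem horth
    · constructor
      · simp [ev, EuclideanSpace.single_apply, h01, Prod.smul_def]
      · simp [ev, EuclideanSpace.single_apply, h01, Prod.smul_def]
    · rintro w ⟨h1, h2⟩
      have hsub : (ev n 1, (-2:ℝ) • ev n 0) - (3/2:ℝ) • ((ev n 1, -(ev n 0)) : EV n × EV n)
          = ((-(1/2) : ℝ) • ev n 1, (-(1/2) : ℝ) • ev n 0) := by
        refine Prod.ext ?_ ?_ <;> simp [Prod.smul_def, Prod.sub_def] <;> module
      rw [hsub]
      simp [pairInner, real_inner_smul_left, ev, EuclideanSpace.inner_single_left]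
      linarith
  · -- j ≥ 2 cases
    intro k hk
    have hlt := k.isLt
    have hk0 : (k.succ : Fin (n+1)) ≠ 0 := Fin.succ_ne_zero k
    have hk1 : (k.succ : Fin (n+1)) ≠ 1 := by
      intro h; have := congrArg Fin.val h; rw [Fin.val_succ, hval1] at this; omega
    constructor
    · have hUj : DX n (ev n k.succ, (0:EV n)) = ((0:EV n), -(ev n k.succ)) := by
        simp [DX, ev]
      rw [hUj]
      apply proj_key pr hmem horth
      · exact ⟨rfl, by simp [ev, EuclideanSpace.single_apply, Ne.symm hk0]⟩
      · rintro w ⟨h1, h2⟩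
        simp [pairInner]
    · have hVj : DX n ((0:EV n), ev n k.succ) = (ev n k.succ, (0:EV n)) := by
        simp [DX, ev, EuclideanSpace.single_apply, Ne.symm hk1]
      rw [hVj]
      apply proj_key pr hmem horth
      · exact ⟨by simp [ev, EuclideanSpace.single_apply, Ne.symm hk0], by
          simp [ev, EuclideanSpace.single_apply, Ne.symm hk1]⟩
      · rintro w ⟨h1, h2⟩
        simp [pairInner]
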